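/- (Random merging of clusters) Let a clustering C = (A_1,…,A_m) of a finite vertex set have MAX-AGREE objective value OPT = C⁻ + Σ_{ij} η_{ij} χ_{ij}, where χ_{ij} = 1 iff i,j are in the same cluster, η_{ij} = c⁺_{ij} - c⁻_{ij}, and C⁻ = Σ_{ij} c⁻_{ij} with c⁺, c⁻ ≥ 0. Color each cluster independently and uniformly with one of t colors and merge clusters of equal color. Then the expected objective of the merged clustering is C⁻ + Σ_{ij} η_{ij} χ_{ij} + (1/t) Σ_{ij} η_{ij}(1 - χ_{ij}), and this is at least (1 - 1/t)·OPT. -/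

import Mathlib

open Finset

lemma count_eq_color {m t : ℕ} {a b : Fin m} (hab : a ≠ b) :
    (Finset.univ.filter (fun col : Fin m → Fin t => col a = col b)).card = t ^ (m - 1) := by
  rw [← Fintype.card_subtype]
  have e : {col : Fin m → Fin t // col a = col b} ≃ ({x : Fin m // x ≠ b} → Fin t) :=
  { toFun := fun f x => f.1 x.1
    invFun := fun g => ⟨fun x => if h : x = b then g ⟨a, hab⟩ else g ⟨x, h⟩, by simp [hab]⟩
    left_inv := by
      rintro ⟨f, hf⟩
      apply Subtype.ext
      funext x
      dsimp
      by_cases h : x = b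
      · subst h; simp [hf]
      · simp [h]
    right_inv := by intro g; ext ⟨x, hx⟩; simp [hx] }
  rw [Fintype.card_congr e, Fintype.card_fun, Fintype.card_fin]
  congr 1
  have : Fintype.card {x : Fin m // x = b} = 1 := Fintype.card_subtype_eq b
  have h := Fintype.card_subtype_compl (fun x : Fin m => x = b)
  simpa [this] using h

lemma key_sum {m t : ℕ} (ht : 0 < t) (a b : Fin m) :
    ∑ col : Fin m → Fin t, (if col a = col b then (1 : ℝ) else 0)
      = (t : ℝ) ^ m * (if a = b then 1 else 1 / (t:ℝ)) := by
  have ht' : (0 : ℝ) < t := by exact_mod_cast ht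
  by_cases hab : a = b
  · subst hab
    simp [Finset.card_univ, Fintype.card_fun]
  · rw [Finset.sum_boole, count_eq_color hab]
    have hm : 1 ≤ m := Nat.one_le_iff_ne_zero.mpr (by rintro rfl; exact a.elim0)
    have : (t : ℝ) ^ m = (t : ℝ) ^ (m - 1) * t := by
      rw [← pow_succ, Nat.sub_add_cancel hm]
    rw [if_neg hab, this]
    push_cast
    field_simp

/-- Random merging of clusters: given a clustering cl : V → Fin m with MAX-AGREE
objective OPT = C⁻ + Σ_{ij} η_{ij} χ_{ij}, coloring each cluster independently and
uniformly with one of t colors and merging equal-colored clusters yields expected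
objective C⁻ + Σ_{ij} η_{ij} χ_{ij} + (1/t) Σ_{ij} η_{ij} (1 - χ_{ij}),
which is at least (1 - 1/t)·OPT. -/
theorem random_cluster_merging {V : Type*} [Fintype V]
    (E : Finset (V × V)) (m t : ℕ) (ht : 0 < t)
    (cp cm : V → V → ℝ)
    (hcp : ∀ i j, 0 ≤ cp i j) (hcm : ∀ i j, 0 ≤ cm i j)
    (η : V → V → ℝ) (hη : ∀ i j, η i j = cp i j - cm i j)
    (cl : V → Fin m) :
    ((1 : ℝ) / (t : ℝ) ^ m) * ∑ col : Fin m → Fin t,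
        ((∑ e ∈ E, cm e.1 e.2) +
          ∑ e ∈ E, η e.1 e.2 * (if col (cl e.1) = col (cl e.2) then (1 : ℝ) else 0))
      = (∑ e ∈ E, cm e.1 e.2)
          + (∑ e ∈ E, η e.1 e.2 * (if cl e.1 = cl e.2 then (1 : ℝ) else 0))
          + (1 / (t : ℝ)) *
              ∑ e ∈ E, η e.1 e.2 * (1 - if cl e.1 = cl e.2 then (1 : ℝ) else 0)
    ∧
    (1 - 1 / (t : ℝ)) *
        ((∑ e ∈ E, cm e.1 e.2)
          + ∑ e ∈ E, η e.1 e.2 * (if cl e.1 = cl e.2 then (1 : ℝ) else 0))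
      ≤ ((1 : ℝ) / (t : ℝ) ^ m) * ∑ col : Fin m → Fin t,
          ((∑ e ∈ E, cm e.1 e.2) +
            ∑ e ∈ E, η e.1 e.2 * (if col (cl e.1) = col (cl e.2) then (1 : ℝ) else 0)) := by
  have ht' : (0 : ℝ) < t := by exact_mod_cast ht
  have htm : (0 : ℝ) < (t : ℝ) ^ m := by positivity
  have h1 : ((1 : ℝ) / (t : ℝ) ^ m) * ∑ col : Fin m → Fin t,
        ((∑ e ∈ E, cm e.1 e.2) +
          ∑ e ∈ E, η e.1 e.2 * (if col (cl e.1) = col (cl e.2) then (1 : ℝ) else 0))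
      = (∑ e ∈ E, cm e.1 e.2)
        + ∑ e ∈ E, η e.1 e.2 * (if cl e.1 = cl e.2 then (1 : ℝ) else 1 / (t:ℝ)) := by
    rw [Finset.sum_add_distrib, Finset.sum_const, Finset.card_univ, Fintype.card_fun,
      Fintype.card_fin, Fintype.card_fin, Finset.sum_comm]
    have h2 : ∀ e ∈ E, (∑ col : Fin m → Fin t,
        η e.1 e.2 * (if col (cl e.1) = col (cl e.2) then (1 : ℝ) else 0))
        = (t : ℝ) ^ m * (η e.1 e.2 * (if cl e.1 = cl e.2 then (1 : ℝ) else 1 / (t:ℝ))) := by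
      intro e _
      rw [← Finset.mul_sum, key_sum ht]
      ring
    rw [Finset.sum_congr rfl h2, ← Finset.mul_sum, nsmul_eq_mul]
    push_cast
    field_simp
  have h3 : (∑ e ∈ E, η e.1 e.2 * (if cl e.1 = cl e.2 then (1 : ℝ) else 0))
      + (1 / (t : ℝ)) * ∑ e ∈ E, η e.1 e.2 * (1 - if cl e.1 = cl e.2 then (1 : ℝ) else 0)
      = ∑ e ∈ E, η e.1 e.2 * (if cl e.1 = cl e.2 then (1 : ℝ) else 1 / (t:ℝ)) := by
    rw [Finset.mul_sum, ← Finset.sum_add_distrib]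
    refine Finset.sum_congr rfl fun e _ => ?_
    by_cases h : cl e.1 = cl e.2 <;> simp [h] <;> ring
  constructor
  · rw [h1, ← h3]; ring
  · rw [h1, ← h3]
    have hS : (0 : ℝ) ≤ (∑ e ∈ E, cm e.1 e.2)
        + ((∑ e ∈ E, η e.1 e.2 * (if cl e.1 = cl e.2 then (1 : ℝ) else 0))
          + ∑ e ∈ E, η e.1 e.2 * (1 - if cl e.1 = cl e.2 then (1 : ℝ) else 0)) := by
      have : (∑ e ∈ E, cm e.1 e.2)
          + ((∑ e ∈ E, η e.1 e.2 * (if cl e.1 = cl e.2 then (1 : ℝ) else 0))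
            + ∑ e ∈ E, η e.1 e.2 * (1 - if cl e.1 = cl e.2 then (1 : ℝ) else 0))
          = ∑ e ∈ E, cp e.1 e.2 := by
        rw [← Finset.sum_add_distrib, ← Finset.sum_add_distrib]
        refine Finset.sum_congr rfl fun e _ => ?_
        rw [hη]; ring
      rw [this]
      exact Finset.sum_nonneg fun e _ => hcp e.1 e.2
    have h1t : 0 < 1 / (t : ℝ) := by positivity
    nlinarith [hS]
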